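/- Let d, m ≥ 1 and k ≥ 2 be integers. Let 𝒳 ⊆ ℝ^m be a nonempty compact set such that z ↦ dist(z, 𝒳)^{−(k−1)} is locally integrable on ℝ^m, and let ρ be a map of class C¹ on ℝ^m ∖ 𝒳 with values in ℝ^m satisfying ‖Dρ(z)‖ ≤ C₀ / dist(z, 𝒳) for all z ∈ ℝ^m ∖ 𝒳 and some C₀ > 0. Then for all M, Λ > 0 there exists a constant C, depending only on m, k, M, Λ, C₀ and 𝒳, such that for every bounded open set Ω ⊆ ℝ^d and every C¹ map v : Ω → ℝ^m with |v(x)| ≤ Λ for all x ∈ Ω, one has ∫_{B_M^m} ( ∫_{{x ∈ Ω : v(x) − y ∉ 𝒳}} ‖Dρ(v(x) − y)‖^{k−1} ‖Dv(x)‖^{k−1} dx ) dy ≤ C ∫_Ω ‖Dv(x)‖^{k−1} dx. -/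

import Mathlib

open MeasureTheory
open scoped ENNReal

/-- The projection estimate (key estimate of Lemma 3.6): if `dist(·, 𝒳)^{-(k-1)}` is
locally integrable and `‖Dρ(z)‖ ≤ C₀ / dist(z, 𝒳)`, then for all `M, Λ > 0` there is a
constant `C` such that for every bounded open `Ω ⊆ ℝ^d` and every `C¹` map `v : Ω → ℝ^m`
with `|v| ≤ Λ`, the average over `y ∈ B_M` of `∫_Ω ‖D(ρ∘(v - y))‖^{k-1}` is bounded by
`C ∫_Ω ‖Dv‖^{k-1}`. -/
theorem projection_gradient_estimate (d m k : ℕ) (hd : 1 ≤ d) (hm : 1 ≤ m) (hk : 2 ≤ k)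
    (𝒳 : Set (EuclideanSpace ℝ (Fin m))) (h𝒳ne : 𝒳.Nonempty) (h𝒳c : IsCompact 𝒳)
    (hloc : ∀ R : ℝ, 0 < R →
      ∫⁻ z in Metric.ball (0 : EuclideanSpace ℝ (Fin m)) R,
          ((ENNReal.ofReal (Metric.infDist z 𝒳))⁻¹) ^ (k - 1) < ⊤)
    (ρ : EuclideanSpace ℝ (Fin m) → EuclideanSpace ℝ (Fin m))
    (hρ : ContDiffOn ℝ 1 ρ 𝒳ᶜ)
    (C₀ : ℝ) (hC₀ : 0 < C₀)
    (hDρ : ∀ z ∉ 𝒳, ‖fderiv ℝ ρ z‖ ≤ C₀ / Metric.infDist z 𝒳)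
    (M Λ : ℝ) (hM : 0 < M) (hΛ : 0 < Λ) :
    ∃ C : ℝ, 0 < C ∧
      ∀ (Ω : Set (EuclideanSpace ℝ (Fin d))), IsOpen Ω → Bornology.IsBounded Ω →
        ∀ v : EuclideanSpace ℝ (Fin d) → EuclideanSpace ℝ (Fin m),
          ContDiffOn ℝ 1 v Ω → (∀ x ∈ Ω, ‖v x‖ ≤ Λ) →
          (∫⁻ y in Metric.ball (0 : EuclideanSpace ℝ (Fin m)) M,
              ∫⁻ x in {x ∈ Ω | v x - y ∉ 𝒳},
                ENNReal.ofReal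
                  (‖fderiv ℝ ρ (v x - y)‖ ^ (k - 1) * ‖fderiv ℝ v x‖ ^ (k - 1)))
            ≤ ENNReal.ofReal C *
                ∫⁻ x in Ω, ENNReal.ofReal (‖fderiv ℝ v x‖ ^ (k - 1)) := by
  classical
  set g : EuclideanSpace ℝ (Fin m) → ℝ≥0∞ :=
    fun z => ((ENNReal.ofReal (Metric.infDist z 𝒳))⁻¹) ^ (k - 1) with hgdef
  have hgmeas : Measurable g := by
    apply Measurable.pow_const
    exact (ENNReal.measurable_ofReal.comp (Metric.continuous_infDist_pt 𝒳).measurable).inv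
  have hRpos : (0:ℝ) < Λ + M := by linarith
  set K : ℝ≥0∞ := ∫⁻ z in Metric.ball (0 : EuclideanSpace ℝ (Fin m)) (Λ + M), g z with hKdef
  have hKlt : K ≠ ⊤ := (hloc _ hRpos).ne
  set c : ℝ≥0∞ := ENNReal.ofReal (C₀ ^ (k-1)) with hcdef
  refine ⟨C₀ ^ (k-1) * (K.toReal + 1), by positivity, ?_⟩
  intro Ω hΩo hΩb v hv hvΛ
  have hvae : AEMeasurable v (volume.restrict Ω) :=
    (hv.continuousOn).aemeasurable hΩo.measurableSet
  set E : EuclideanSpace ℝ (Fin d) → ℝ≥0∞ :=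
    fun x => ENNReal.ofReal (‖fderiv ℝ v x‖ ^ (k - 1)) with hEdef
  have hEmeas : Measurable E :=
    ENNReal.measurable_ofReal.comp (((measurable_fderiv ℝ v).norm).pow_const _)
  set F : EuclideanSpace ℝ (Fin m) → EuclideanSpace ℝ (Fin d) → ℝ≥0∞ :=
    fun y x => g (v x - y) * E x with hFdef
  -- Step A : pointwise bound on each fiber
  have stepA : ∀ y : EuclideanSpace ℝ (Fin m),
      (∫⁻ x in {x ∈ Ω | v x - y ∉ 𝒳},
          ENNReal.ofReal
            (‖fderiv ℝ ρ (v x - y)‖ ^ (k - 1) * ‖fderiv ℝ v x‖ ^ (k - 1)))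
        ≤ ∫⁻ x in Ω, c * F y x := by
    intro y
    have hsub : {x | x ∈ Ω ∧ v x - y ∉ 𝒳} ⊆ Ω := fun x hx => hx.1
    have hFae : AEMeasurable (fun x => c * F y x)
        (volume.restrict {x | x ∈ Ω ∧ v x - y ∉ 𝒳}) := by
      have h1 : AEMeasurable (fun x => c * F y x) (volume.restrict Ω) := by
        have hvy : AEMeasurable (fun x => v x - y) (volume.restrict Ω) :=
          hvae.sub aemeasurable_const
        exact aemeasurable_const.mul
          ((hgmeas.comp_aemeasurable hvy).mul hEmeas.aemeasurable)
      exact h1.mono_measure (Measure.restrict_mono hsub le_rfl)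
    refine le_trans (setLIntegral_mono_ae hFae (Filter.Eventually.of_forall ?_))
      (lintegral_mono_set hsub)
    rintro x ⟨hxΩ, hxn⟩
    have ht : 0 < Metric.infDist (v x - y) 𝒳 :=
      (h𝒳c.isClosed.notMem_iff_infDist_pos h𝒳ne).1 hxn
    set t := Metric.infDist (v x - y) 𝒳 with htdef
    have h1 : ‖fderiv ℝ ρ (v x - y)‖ ^ (k - 1) * ‖fderiv ℝ v x‖ ^ (k - 1)
        ≤ (C₀ ^ (k-1) * (t⁻¹) ^ (k-1)) * ‖fderiv ℝ v x‖ ^ (k - 1) := by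
      have h2 : ‖fderiv ℝ ρ (v x - y)‖ ^ (k - 1) ≤ (C₀ / t) ^ (k-1) :=
        pow_le_pow_left₀ (norm_nonneg _) (hDρ _ hxn) _
      rw [div_eq_mul_inv, mul_pow] at h2
      exact mul_le_mul_of_nonneg_right h2 (by positivity)
    refine le_trans (ENNReal.ofReal_le_ofReal h1) (le_of_eq ?_)
    have e1 : ENNReal.ofReal ((t⁻¹) ^ (k-1)) = ((ENNReal.ofReal t)⁻¹) ^ (k-1) := by
      rw [ENNReal.ofReal_pow (by positivity), ENNReal.ofReal_inv_of_pos ht]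
    rw [ENNReal.ofReal_mul (by positivity), ENNReal.ofReal_mul (by positivity), e1,
      mul_assoc]
  -- measurability of the joint integrand for Tonelli
  have hunc : AEMeasurable (Function.uncurry F)
      ((volume.restrict (Metric.ball (0 : EuclideanSpace ℝ (Fin m)) M)).prod
        (volume.restrict Ω)) := by
    have h2 : AEMeasurable (fun p : EuclideanSpace ℝ (Fin m) × EuclideanSpace ℝ (Fin d)
        => v p.2)
        ((volume.restrict (Metric.ball (0 : EuclideanSpace ℝ (Fin m)) M)).prod
          (volume.restrict Ω)) := hvae.comp_snd
    have h3 := h2.sub measurable_fst.aemeasurable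
    exact (hgmeas.comp_aemeasurable h3).mul (hEmeas.comp measurable_snd).aemeasurable
  -- Step C : inner translation estimate
  have stepC : (∫⁻ x in Ω, ∫⁻ y in Metric.ball (0 : EuclideanSpace ℝ (Fin m)) M, F y x)
      ≤ ∫⁻ x in Ω, K * E x := by
    refine setLIntegral_mono (measurable_const.mul hEmeas) fun x hxΩ => ?_
    have hfin : (∫⁻ y in Metric.ball (0 : EuclideanSpace ℝ (Fin m)) M, F y x)
        = (∫⁻ y in Metric.ball (0 : EuclideanSpace ℝ (Fin m)) M, g (v x - y)) * E x :=
      lintegral_mul_const' (E x) _ ENNReal.ofReal_ne_top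
    rw [hfin]
    refine mul_le_mul_left ?_ (E x)
    set φ : EuclideanSpace ℝ (Fin m) → ℝ≥0∞ :=
      (Metric.ball (0 : EuclideanSpace ℝ (Fin m)) (Λ + M)).indicator g with hφdef
    have hφmeas : Measurable φ := hgmeas.indicator measurableSet_ball
    calc (∫⁻ y in Metric.ball (0 : EuclideanSpace ℝ (Fin m)) M, g (v x - y))
        ≤ ∫⁻ y in Metric.ball (0 : EuclideanSpace ℝ (Fin m)) M, φ (v x - y) := by
          refine setLIntegral_mono (hφmeas.comp (measurable_id.const_sub (v x)))
            fun y hy => ?_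
          have hmem : v x - y ∈ Metric.ball (0 : EuclideanSpace ℝ (Fin m)) (Λ + M) := by
            rw [mem_ball_zero_iff]
            calc ‖v x - y‖ ≤ ‖v x‖ + ‖y‖ := norm_sub_le _ _
              _ < Λ + M := add_lt_add_of_le_of_lt (hvΛ x hxΩ) (mem_ball_zero_iff.1 hy)
          rw [hφdef, Set.indicator_of_mem hmem]
      _ ≤ ∫⁻ y, φ (v x - y) := setLIntegral_le_lintegral _ _
      _ = ∫⁻ z, φ z :=
          (Measure.measurePreserving_sub_left volume (v x)).lintegral_comp hφmeas
      _ = K := by rw [hφdef, lintegral_indicator measurableSet_ball]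
  -- put everything together
  have hcK : c * K ≤ ENNReal.ofReal (C₀ ^ (k-1) * (K.toReal + 1)) := by
    rw [ENNReal.ofReal_mul (by positivity)]
    refine mul_le_mul_right ?_ c
    nth_rewrite 1 [← ENNReal.ofReal_toReal hKlt]
    exact ENNReal.ofReal_le_ofReal (by linarith)
  calc (∫⁻ y in Metric.ball (0 : EuclideanSpace ℝ (Fin m)) M,
          ∫⁻ x in {x ∈ Ω | v x - y ∉ 𝒳},
            ENNReal.ofReal
              (‖fderiv ℝ ρ (v x - y)‖ ^ (k - 1) * ‖fderiv ℝ v x‖ ^ (k - 1)))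
      ≤ ∫⁻ y in Metric.ball (0 : EuclideanSpace ℝ (Fin m)) M,
          ∫⁻ x in Ω, c * F y x := lintegral_mono fun y => stepA y
    _ = c * ∫⁻ y in Metric.ball (0 : EuclideanSpace ℝ (Fin m)) M,
          ∫⁻ x in Ω, F y x := by
        simp_rw [lintegral_const_mul' c _ ENNReal.ofReal_ne_top]
    _ = c * ∫⁻ x in Ω, ∫⁻ y in Metric.ball (0 : EuclideanSpace ℝ (Fin m)) M, F y x := by
        rw [lintegral_lintegral_swap hunc]
    _ ≤ c * ∫⁻ x in Ω, K * E x := mul_le_mul_right stepC c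
    _ = c * K * ∫⁻ x in Ω, E x := by
        rw [lintegral_const_mul' K _ hKlt, mul_assoc]
    _ ≤ ENNReal.ofReal (C₀ ^ (k-1) * (K.toReal + 1)) * ∫⁻ x in Ω, E x :=
        mul_le_mul_left hcK _
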